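/- arXiv:2312.01667 — 2 statements merged into one kernel-verified Lean document; each statement's English description precedes it below -/
import Mathlib

section
/- Let σ_x = !![0, 1; 1, 0], σ_y = !![0, -I; I, 0], σ_z = !![1, 0; 0, -1] and τ_y = σ_y, τ_z = σ_z denote Pauli matrices in Matrix (Fin 2) (Fin 2) ℂ, and let 1 denote the 2×2 identity. For k = (k_x, k_y, k_z) ∈ ℝ³ and m ∈ ℝ, define the 4×4 complex matrix H = k_x • (1 ⊗ σ_x) + k_y • (τ_y ⊗ σ_y) + k_z • (1 ⊗ σ_z) + m • (τ_z ⊗ σ_z), where ⊗ denotes the Kronecker product of matrices. Set ρ = √(k_y² + k_z²). Then the spectrum of H is the set { s₁ · √(k_x² + (ρ + s₂|m|)²) : s₁, s₂ ∈ {1, -1} } ⊆ ℝ ⊆ ℂ; equivalently, every eigenvalue E of H satisfies E = ±√(k_x² + (ρ ± |m|)²), and each such value is an eigenvalue. -/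
open Complex Matrix Kronecker

def e4 : Fin 4 ≃ Fin 2 × Fin 2 where
  toFun := ![(0,0),(0,1),(1,0),(1,1)]
  invFun := fun p => ![![0,1],![2,3]] p.1 p.2
  left_inv := by decide
  right_inv := by decide

lemma det_fin_four' {R : Type*} [CommRing R] (a b c d e f g h i j k l m n o p : R) :
    (!![a,b,c,d; e,f,g,h; i,j,k,l; m,n,o,p]).det =
      a*(f*(k*p-l*o) - g*(j*p-l*n) + h*(j*o-k*n))
      - b*(e*(k*p-l*o) - g*(i*p-l*m) + h*(i*o-k*m))
      + c*(e*(j*p-l*n) - f*(i*p-l*m) + h*(i*n-j*m))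
      - d*(e*(j*o-k*n) - f*(i*o-k*m) + g*(i*n-j*m)) := by
  rw [Matrix.det_succ_row_zero]
  simp [Fin.sum_univ_succ, Matrix.det_fin_three, Fin.succAbove,
    Fin.castSucc, Fin.castAdd, Fin.castLE]
  ring

/-- The four-band nodal-semimetal Hamiltonian
`H = k_x 1⊗σ_x + k_y τ_y⊗σ_y + k_z 1⊗σ_z + m τ_z⊗σ_z` has spectrum
`{ s₁ √(k_x² + (ρ + s₂|m|)²) : s₁, s₂ ∈ {1,-1} }`, where `ρ = √(k_y² + k_z²)`. -/
theorem four_band_spectrum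
    (kx ky kz m : ℝ)
    (σx σy σz : Matrix (Fin 2) (Fin 2) ℂ)
    (hσx : σx = !![0, 1; 1, 0])
    (hσy : σy = !![0, -I; I, 0])
    (hσz : σz = !![1, 0; 0, -1])
    (H : Matrix (Fin 2 × Fin 2) (Fin 2 × Fin 2) ℂ)
    (hH : H = kx • ((1 : Matrix (Fin 2) (Fin 2) ℂ) ⊗ₖ σx) + ky • (σy ⊗ₖ σy)
        + kz • ((1 : Matrix (Fin 2) (Fin 2) ℂ) ⊗ₖ σz) + m • (σz ⊗ₖ σz))
    (ρ : ℝ) (hρ : ρ = Real.sqrt (ky ^ 2 + kz ^ 2)) :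
    spectrum ℂ H =
      {z : ℂ | ∃ s₁ ∈ ({1, -1} : Set ℝ), ∃ s₂ ∈ ({1, -1} : Set ℝ),
        z = ((s₁ * Real.sqrt (kx ^ 2 + (ρ + s₂ * |m|) ^ 2) : ℝ) : ℂ)} := by
  subst hσx hσy hσz
  have hρnn : 0 ≤ ρ := hρ ▸ Real.sqrt_nonneg _
  have hρ2 : ρ ^ 2 = ky ^ 2 + kz ^ 2 := by
    rw [hρ]; exact Real.sq_sqrt (by positivity)
  set a : ℝ := kx ^ 2 + (ρ + |m|) ^ 2 with ha
  set b : ℝ := kx ^ 2 + (ρ - |m|) ^ 2 with hb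
  have hann : 0 ≤ a := by positivity
  have hbnn : 0 ≤ b := by positivity
  set A : ℝ := Real.sqrt a with hA
  set B : ℝ := Real.sqrt b with hB
  have hA2 : ((A : ℂ)) ^ 2 = (a : ℂ) := by
    norm_cast; rw [hA]; exact Real.sq_sqrt hann
  have hB2 : ((B : ℂ)) ^ 2 = (b : ℂ) := by
    norm_cast; rw [hB]; exact Real.sq_sqrt hbnn
  have hab : a + b = 2 * (kx ^ 2 + ky ^ 2 + kz ^ 2 + m ^ 2) := by
    rw [ha, hb]
    linear_combination (2:ℝ) * hρ2 + 2 * _root_.sq_abs m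
  have hmul : a * b = (kx ^ 2 + ky ^ 2 + kz ^ 2 + m ^ 2) ^ 2
      - 4 * m ^ 2 * (ky ^ 2 + kz ^ 2) := by
    rw [ha, hb]
    linear_combination (2*kx^2 + ρ^2 + |m|^2 + ky^2 + kz^2 + m^2 - 4*m^2) * hρ2
      + (2*kx^2 + ρ^2 + |m|^2 + ky^2 + kz^2 + m^2 - 4*ρ^2) * _root_.sq_abs m
  have hab' : ((a : ℂ) + b) = 2 * ((kx:ℂ)^2 + ky^2 + kz^2 + m^2) := by exact_mod_cast hab
  have hmul' : ((a : ℂ) * b) = ((kx:ℂ)^2 + ky^2 + kz^2 + m^2)^2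
      - 4*(m:ℂ)^2*((ky:ℂ)^2 + kz^2) := by exact_mod_cast hmul
  have key : ∀ z : ℂ, (algebraMap ℂ (Matrix (Fin 2 × Fin 2) (Fin 2 × Fin 2) ℂ) z - H).det
      = (z - A) * (z + A) * ((z - B) * (z + B)) := by
    intro z
    have hdet : (algebraMap ℂ (Matrix (Fin 2 × Fin 2) (Fin 2 × Fin 2) ℂ) z - H).det
        = z^4 - 2*((kx:ℂ)^2+ky^2+kz^2+m^2)*z^2
          + (((kx:ℂ)^2+ky^2+kz^2+m^2)^2 - 4*(m:ℂ)^2*((ky:ℂ)^2+kz^2)) := by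
      rw [← Matrix.det_submatrix_equiv_self e4]
      have hM : (algebraMap ℂ (Matrix (Fin 2 × Fin 2) (Fin 2 × Fin 2) ℂ) z - H).submatrix e4 e4
          = !![z - (kz+m), -kx, 0, ky;
               -kx, z + (kz+m), -ky, 0;
               0, -ky, z - (kz-m), -kx;
               ky, 0, -kx, z + (kz-m)] := by
        subst hH
        ext i j
        fin_cases i <;> fin_cases j <;>
          simp [e4, Matrix.algebraMap_matrix_apply, Matrix.kroneckerMap_apply,
            Matrix.one_apply, Prod.ext_iff] <;> ring
      rw [hM, det_fin_four']
      ring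
    rw [hdet]
    linear_combination (z^2 - (b:ℂ)) * hA2 + (z^2 - ((A:ℝ):ℂ)^2) * hB2
      + z^2 * hab' - hmul'
  ext z
  rw [spectrum.mem_iff, Matrix.isUnit_iff_isUnit_det, isUnit_iff_ne_zero, not_not, key z]
  have e1 : kx ^ 2 + (ρ + 1 * |m|) ^ 2 = a := by rw [ha]; ring
  have e2 : kx ^ 2 + (ρ + (-1) * |m|) ^ 2 = b := by rw [hb]; ring
  have q1 : ((1 * Real.sqrt (kx ^ 2 + (ρ + 1 * |m|) ^ 2) : ℝ) : ℂ) = (A:ℂ) := by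
    rw [e1, ← hA, one_mul]
  have q2 : (((-1) * Real.sqrt (kx ^ 2 + (ρ + 1 * |m|) ^ 2) : ℝ) : ℂ) = -(A:ℂ) := by
    rw [e1, ← hA]; push_cast; ring
  have q3 : ((1 * Real.sqrt (kx ^ 2 + (ρ + (-1) * |m|) ^ 2) : ℝ) : ℂ) = (B:ℂ) := by
    rw [e2, ← hB, one_mul]
  have q4 : (((-1) * Real.sqrt (kx ^ 2 + (ρ + (-1) * |m|) ^ 2) : ℝ) : ℂ) = -(B:ℂ) := by
    rw [e2, ← hB]; push_cast; ring
  constructor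
  · intro h
    rcases mul_eq_zero.mp h with h | h
    · rcases mul_eq_zero.mp h with h | h
      · exact ⟨1, Or.inl rfl, 1, Or.inl rfl, by rw [q1]; exact sub_eq_zero.mp h⟩
      · exact ⟨-1, Or.inr rfl, 1, Or.inl rfl, by rw [q2]; exact eq_neg_of_add_eq_zero_left h⟩
    · rcases mul_eq_zero.mp h with h | h
      · exact ⟨1, Or.inl rfl, -1, Or.inr rfl, by rw [q3]; exact sub_eq_zero.mp h⟩
      · exact ⟨-1, Or.inr rfl, -1, Or.inr rfl, by rw [q4]; exact eq_neg_of_add_eq_zero_left h⟩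
  · rintro ⟨s₁, hs₁, s₂, hs₂, rfl⟩
    rcases hs₁ with rfl | rfl <;> rcases hs₂ with rfl | rfl
    · rw [q1]; ring
    · rw [q3]; ring
    · rw [q2]; ring
    · rw [q4]; ring
end

section
/- Let σ_x = !![0, 1; 1, 0], σ_y = !![0, -I; I, 0], σ_z = !![1, 0; 0, -1] and τ_y = σ_y, τ_z = σ_z denote Pauli matrices in Matrix (Fin 2) (Fin 2) ℂ, and let 1 denote the 2×2 identity. For k = (k_x, k_y, k_z) ∈ ℝ³ and m ∈ ℝ with m ≠ 0, define the 4×4 complex matrix H = k_x • (1 ⊗ σ_x) + k_y • (τ_y ⊗ σ_y) + k_z • (1 ⊗ σ_z) + m • (τ_z ⊗ σ_z), where ⊗ denotes the Kronecker product. Then 0 is an eigenvalue of H (equivalently, det H = 0) if and only if k_x = 0 and k_y² + k_z² = m². In particular, the zero set of the band gap is the circle {(0, k_y, k_z) : k_y² + k_z² = m²}, a one-dimensional nodal loop. -/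
open Complex Matrix Kronecker

/-- Explicit equivalence `Fin 4 ≃ Fin 2 × Fin 2` used to reindex the Hamiltonian. -/
def nodalIdx : Fin 4 ≃ Fin 2 × Fin 2 where
  toFun := ![(0, 0), (0, 1), (1, 0), (1, 1)]
  invFun := fun p => ![![0, 1], ![2, 3]] p.1 p.2
  left_inv := by decide
  right_inv := by decide

/-- For the four-band nodal-semimetal Hamiltonian
`H = k_x 1⊗σ_x + k_y τ_y⊗σ_y + k_z 1⊗σ_z + m τ_z⊗σ_z` with `m ≠ 0`, zero is an
eigenvalue of `H` (equivalently `det H = 0`) if and only if `k_x = 0` and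
`k_y² + k_z² = m²`: the band crossings form a nodal loop. -/
theorem four_band_nodal_loop
    (kx ky kz m : ℝ) (hm : m ≠ 0)
    (σx σy σz : Matrix (Fin 2) (Fin 2) ℂ)
    (hσx : σx = !![0, 1; 1, 0])
    (hσy : σy = !![0, -I; I, 0])
    (hσz : σz = !![1, 0; 0, -1])
    (H : Matrix (Fin 2 × Fin 2) (Fin 2 × Fin 2) ℂ)
    (hH : H = kx • ((1 : Matrix (Fin 2) (Fin 2) ℂ) ⊗ₖ σx) + ky • (σy ⊗ₖ σy)
        + kz • ((1 : Matrix (Fin 2) (Fin 2) ℂ) ⊗ₖ σz) + m • (σz ⊗ₖ σz)) :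
    ((0 : ℂ) ∈ spectrum ℂ H ↔ (kx = 0 ∧ ky ^ 2 + kz ^ 2 = m ^ 2)) ∧
      (H.det = 0 ↔ (kx = 0 ∧ ky ^ 2 + kz ^ 2 = m ^ 2)) := by
  have hdet : H.det
      = (((ky ^ 2 + kz ^ 2 - m ^ 2) ^ 2 + kx ^ 4
          + 2 * kx ^ 2 * (ky ^ 2 + kz ^ 2 + m ^ 2) : ℝ) : ℂ) := by
    rw [← Matrix.det_submatrix_equiv_self nodalIdx H]
    have h4 : H.submatrix nodalIdx nodalIdx
        = !![(kz:ℂ)+m, kx, 0, -ky;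
             kx, -(kz+m), ky, 0;
             0, ky, kz-m, kx;
             -ky, 0, kx, m-kz] := by
      subst hσx hσy hσz hH
      ext i j
      fin_cases i <;> fin_cases j <;>
        · simp [nodalIdx, Matrix.one_apply]
          try ring_nf
          try simp [Complex.I_sq]
          try ring
    rw [h4]
    simp [Matrix.det_succ_row_zero, Fin.sum_univ_succ, Fin.succAbove, Fin.castSucc, Fin.castAdd, Fin.castLE]
    ring
  have key : H.det = 0 ↔ (kx = 0 ∧ ky ^ 2 + kz ^ 2 = m ^ 2) := by
    rw [hdet, Complex.ofReal_eq_zero]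
    constructor
    · intro h
      have hm2 : 0 < m ^ 2 := by positivity
      have h2 : kx ^ 2 * m ^ 2 ≤ 0 := by
        nlinarith [sq_nonneg (ky ^ 2 + kz ^ 2 - m ^ 2), sq_nonneg (kx ^ 2),
          mul_nonneg (sq_nonneg kx) (sq_nonneg ky),
          mul_nonneg (sq_nonneg kx) (sq_nonneg kz)]
      have hxm : kx ^ 2 * m ^ 2 = 0 := le_antisymm h2 (by positivity)
      have hx2 : kx ^ 2 = 0 := by
        rcases mul_eq_zero.mp hxm with h' | h'
        · exact h'
        · exact absurd h' hm2.ne'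
      have hkx : kx = 0 := by
        exact pow_eq_zero_iff (two_ne_zero) |>.mp hx2
      exact ⟨hkx, by nlinarith [sq_nonneg (ky ^ 2 + kz ^ 2 - m ^ 2)]⟩
    · rintro ⟨h1, h2⟩
      rw [h1, h2]; ring
  refine ⟨?_, key⟩
  rw [spectrum.zero_mem_iff, Matrix.isUnit_iff_isUnit_det, isUnit_iff_ne_zero,
    not_ne_iff]
  exact key
end
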